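/- For symmetric matrices A, B ∈ ℝ^{N×N} with eigenvalues α_1 ≤ … ≤ α_N and β_1 ≤ … ≤ β_N, the sorted eigenvalue vectors satisfy ‖α − β‖_1 ≤ √N · ‖A − B‖_F. -/

import Mathlib

open Matrix

private lemma hw_multiset_ofFn {N : ℕ} (f : Fin N → ℝ) :
    Multiset.map f Finset.univ.val = (List.ofFn f : Multiset ℝ) := by
  rw [List.ofFn_eq_map]; rfl

private lemma hw_exists_perm_comp {N : ℕ} {f g : Fin N → ℝ} (hf : Monotone f)
    (h : Multiset.map f Finset.univ.val = Multiset.map g Finset.univ.val) :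
    ∃ σ : Equiv.Perm (Fin N), g ∘ σ = f := by
  refine ⟨Tuple.sort g, ?_⟩
  have hperm : (List.ofFn (g ∘ Tuple.sort g)).Perm (List.ofFn f) := by
    refine ((Tuple.sort g).ofFn_comp_perm g).trans ?_
    rw [hw_multiset_ofFn, hw_multiset_ofFn] at h
    exact (Multiset.coe_eq_coe.mp h).symm
  exact List.ofFn_injective (hperm.eq_of_sortedLE
    (Tuple.monotone_sort g).sortedLE_ofFn hf.sortedLE_ofFn)

private lemma hw_trace_diag {N : ℕ} (a b : Fin N → ℝ) (W : Matrix (Fin N) (Fin N) ℝ) :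
    trace (diagonal a * W * diagonal b * Wᵀ) = ∑ i, ∑ j, a i * b j * (W i j)^2 := by
  simp only [trace, diag_apply, mul_apply, transpose_apply, diagonal_apply, ite_mul, zero_mul,
    Finset.sum_ite_eq, Finset.mem_univ, if_true]
  congr 1; ext i; congr 1; ext j
  simp only [mul_ite, mul_zero, Finset.sum_mul, ite_mul, zero_mul, Finset.sum_ite_eq,
    Finset.sum_ite_eq', Finset.mem_univ, if_true]
  ring

private lemma hw_key_trace {N : ℕ} (a b : Fin N → ℝ) (U V : Matrix (Fin N) (Fin N) ℝ)
    (hU : U * Uᵀ = 1) :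
    trace ((U * diagonal a * Uᵀ) * (V * diagonal b * Vᵀ))
      = ∑ i, ∑ j, a i * b j * ((Uᵀ * V) i j)^2 := by
  have hU' : Uᵀ * U = 1 := mul_eq_one_comm.mp hU
  have key : (U * diagonal a * Uᵀ) * (V * diagonal b * Vᵀ)
      = U * (diagonal a * (Uᵀ * V) * diagonal b * (Uᵀ * V)ᵀ) * Uᵀ := by
    simp only [Matrix.transpose_mul, Matrix.transpose_transpose]
    symm
    calc U * (diagonal a * (Uᵀ * V) * diagonal b * (Vᵀ * U)) * Uᵀ
        = (U * diagonal a * Uᵀ * V * diagonal b * Vᵀ) * (U * Uᵀ) := by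
          simp only [Matrix.mul_assoc]
      _ = (U * diagonal a * Uᵀ) * (V * diagonal b * Vᵀ) := by
          rw [hU, Matrix.mul_one]; simp only [Matrix.mul_assoc]
  rw [key, Matrix.trace_mul_cycle, ← Matrix.mul_assoc, hU', Matrix.one_mul, hw_trace_diag]

private lemma hw_ds_bound {N : ℕ} (α β : Fin N → ℝ) (hα : Monotone α) (hβ : Monotone β)
    (π ρ : Equiv.Perm (Fin N)) (S : Matrix (Fin N) (Fin N) ℝ)
    (hS : S ∈ doublyStochastic ℝ (Fin N)) :
    ∑ i, ∑ j, α (π i) * β (ρ j) * S i j ≤ ∑ i, α i * β i := by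
  obtain ⟨w, hw0, hw1, hwS⟩ := exists_eq_sum_perm_of_mem_doublyStochastic hS
  have hperm : ∀ σ : Equiv.Perm (Fin N),
      ∑ i, ∑ j, α (π i) * β (ρ j) * (σ.permMatrix ℝ) i j ≤ ∑ i, α i * β i := by
    intro σ
    have h1 : ∀ i, ∑ j, α (π i) * β (ρ j) * (σ.permMatrix ℝ) i j = α (π i) * β (ρ (σ i)) := by
      intro i
      simp [Equiv.Perm.permMatrix, PEquiv.toMatrix_apply, Equiv.toPEquiv_apply, mul_ite]
    rw [Finset.sum_congr rfl fun i _ => h1 i]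
    have h2 : ∑ i, α (π i) * β (ρ (σ i)) = ∑ k, α k * β ((π.symm.trans (σ.trans ρ)) k) := by
      rw [← Equiv.sum_comp π (fun k => α k * β ((π.symm.trans (σ.trans ρ)) k))]
      simp
    rw [h2]
    exact (hα.monovary hβ).sum_mul_comp_perm_le_sum_mul
  have hpt : ∀ i j, α (π i) * β (ρ j) * (∑ σ : Equiv.Perm (Fin N), w σ • σ.permMatrix ℝ) i j
      = ∑ σ : Equiv.Perm (Fin N), w σ * (α (π i) * β (ρ j) * (σ.permMatrix ℝ) i j) := by
    intro i j
    rw [Matrix.sum_apply, Finset.mul_sum]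
    exact Finset.sum_congr rfl fun σ _ => by
      simp only [Matrix.smul_apply, smul_eq_mul]; ring
  calc ∑ i, ∑ j, α (π i) * β (ρ j) * S i j
      = ∑ i, ∑ j, ∑ σ : Equiv.Perm (Fin N),
          w σ * (α (π i) * β (ρ j) * (σ.permMatrix ℝ) i j) := by
        rw [← hwS]
        exact Finset.sum_congr rfl fun i _ => Finset.sum_congr rfl fun j _ => hpt i j
    _ = ∑ i, ∑ σ : Equiv.Perm (Fin N), ∑ j,
          w σ * (α (π i) * β (ρ j) * (σ.permMatrix ℝ) i j) :=
        Finset.sum_congr rfl fun i _ => Finset.sum_comm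
    _ = ∑ σ : Equiv.Perm (Fin N), ∑ i, ∑ j,
          w σ * (α (π i) * β (ρ j) * (σ.permMatrix ℝ) i j) := Finset.sum_comm
    _ = ∑ σ : Equiv.Perm (Fin N), w σ * ∑ i, ∑ j,
          α (π i) * β (ρ j) * (σ.permMatrix ℝ) i j := by
        exact Finset.sum_congr rfl fun σ _ => by simp [Finset.mul_sum]
    _ ≤ ∑ σ : Equiv.Perm (Fin N), w σ * ∑ i, α i * β i :=
        Finset.sum_le_sum fun σ _ => mul_le_mul_of_nonneg_left (hperm σ) (hw0 σ)
    _ = ∑ i, α i * β i := by rw [← Finset.sum_mul, hw1, one_mul]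

private lemma hw_spectral {N : ℕ} (A : Matrix (Fin N) (Fin N) ℝ) (hA : A.IsHermitian) :
    A = (hA.eigenvectorUnitary : Matrix (Fin N) (Fin N) ℝ) * diagonal hA.eigenvalues
      * (hA.eigenvectorUnitary : Matrix (Fin N) (Fin N) ℝ)ᵀ := by
  have h := hA.spectral_theorem
  have hst : star (hA.eigenvectorUnitary : Matrix (Fin N) (Fin N) ℝ)
      = (hA.eigenvectorUnitary : Matrix (Fin N) (Fin N) ℝ)ᵀ := by
    ext i j; simp [Matrix.star_apply]
  rw [Unitary.conjStarAlgAut_apply, hst] at h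
  simpa using h

private lemma hw_unitary {N : ℕ} (A : Matrix (Fin N) (Fin N) ℝ) (hA : A.IsHermitian) :
    (hA.eigenvectorUnitary : Matrix (Fin N) (Fin N) ℝ)
      * (hA.eigenvectorUnitary : Matrix (Fin N) (Fin N) ℝ)ᵀ = 1 := by
  have h := (Unitary.mem_iff.mp hA.eigenvectorUnitary.2).2
  have hst : star (hA.eigenvectorUnitary : Matrix (Fin N) (Fin N) ℝ)
      = (hA.eigenvectorUnitary : Matrix (Fin N) (Fin N) ℝ)ᵀ := by
    ext i j; simp [Matrix.star_apply]
  rwa [hst] at h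

/-- Hoffman–Wielandt, squares form. -/
private lemma hw_main {N : ℕ} (A B : Matrix (Fin N) (Fin N) ℝ)
    (hA : A.IsHermitian) (hB : B.IsHermitian)
    (α β : Fin N → ℝ) (hαmono : Monotone α) (hβmono : Monotone β)
    (hα : Multiset.map α Finset.univ.val = Multiset.map hA.eigenvalues Finset.univ.val)
    (hβ : Multiset.map β Finset.univ.val = Multiset.map hB.eigenvalues Finset.univ.val) :
    ∑ i, (α i - β i)^2 ≤ ∑ i, ∑ j, (A i j - B i j)^2 := by
  set a := hA.eigenvalues with ha
  set b := hB.eigenvalues with hb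
  obtain ⟨σa, hσa⟩ := hw_exists_perm_comp hαmono hα
  obtain ⟨σb, hσb⟩ := hw_exists_perm_comp hβmono hβ
  set U := (hA.eigenvectorUnitary : Matrix (Fin N) (Fin N) ℝ) with hUdef
  set V := (hB.eigenvectorUnitary : Matrix (Fin N) (Fin N) ℝ) with hVdef
  have hU : U * Uᵀ = 1 := hw_unitary A hA
  have hV : V * Vᵀ = 1 := hw_unitary B hB
  have hU' : Uᵀ * U = 1 := mul_eq_one_comm.mp hU
  have hV' : Vᵀ * V = 1 := mul_eq_one_comm.mp hV
  have hAspec : A = U * diagonal a * Uᵀ := hw_spectral A hA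
  have hBspec : B = V * diagonal b * Vᵀ := hw_spectral B hB
  -- traces
  have htrAA : trace (A * A) = ∑ i, (a i)^2 := by
    rw [hAspec, hw_key_trace a a U U hU, hU']
    simp [Matrix.one_apply, sq]
  have htrBB : trace (B * B) = ∑ i, (b i)^2 := by
    rw [hBspec, hw_key_trace b b V V hV, hV']
    simp [Matrix.one_apply, sq]
  -- the doubly stochastic matrix
  set W := Uᵀ * V with hWdef
  have hWW : W * Wᵀ = 1 := by
    rw [hWdef, Matrix.transpose_mul, Matrix.transpose_transpose]
    calc Uᵀ * V * (Vᵀ * U) = Uᵀ * (V * Vᵀ) * U := by simp only [Matrix.mul_assoc]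
      _ = 1 := by rw [hV, Matrix.mul_one, hU']
  have hWW' : Wᵀ * W = 1 := mul_eq_one_comm.mp hWW
  have hSds : (Matrix.of fun i j => (W i j)^2) ∈ doublyStochastic ℝ (Fin N) := by
    rw [mem_doublyStochastic_iff_sum]
    refine ⟨fun i j => sq_nonneg _, fun i => ?_, fun j => ?_⟩
    · have := congrFun (congrFun hWW i) i
      simp only [Matrix.mul_apply, Matrix.transpose_apply, Matrix.one_apply_eq] at this
      simpa [sq] using this
    · have := congrFun (congrFun hWW' j) j
      simp only [Matrix.mul_apply, Matrix.transpose_apply, Matrix.one_apply_eq] at this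
      simpa [sq] using this
  have htrAB : trace (A * B) ≤ ∑ i, α i * β i := by
    rw [hAspec, hBspec, hw_key_trace a b U V hU]
    have hentry : ∀ i j, a i * b j * ((Uᵀ * V) i j)^2
        = α (σa.symm i) * β (σb.symm j) * (Matrix.of fun i j => (W i j)^2) i j := by
      intro i j
      have h1 : a i = α (σa.symm i) := by
        conv_lhs => rw [show a i = (a ∘ σa) (σa.symm i) by simp]
        rw [hσa]
      have h2 : b j = β (σb.symm j) := by
        conv_lhs => rw [show b j = (b ∘ σb) (σb.symm j) by simp]
        rw [hσb]
      rw [h1, h2]; rfl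
    calc ∑ i, ∑ j, a i * b j * ((Uᵀ * V) i j)^2
        = ∑ i, ∑ j, α (σa.symm i) * β (σb.symm j) * (Matrix.of fun i j => (W i j)^2) i j :=
          Finset.sum_congr rfl fun i _ => Finset.sum_congr rfl fun j _ => hentry i j
      _ ≤ ∑ i, α i * β i := hw_ds_bound α β hαmono hβmono _ _ _ hSds
  -- symmetric entries
  have hABsymm : ∀ i j, (A - B) j i = (A - B) i j := by
    intro i j
    have h1 : A j i = A i j := by
      conv_lhs => rw [← hA.eq]
      simp [Matrix.conjTranspose_apply]
    have h2 : B j i = B i j := by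
      conv_lhs => rw [← hB.eq]
      simp [Matrix.conjTranspose_apply]
    simp [Matrix.sub_apply, h1, h2]
  have hFrob : ∑ i, ∑ j, (A i j - B i j)^2
      = trace (A * A) - 2 * trace (A * B) + trace (B * B) := by
    have h1 : ∑ i, ∑ j, (A i j - B i j)^2 = trace ((A - B) * (A - B)) := by
      simp only [trace, diag_apply, Matrix.mul_apply]
      refine Finset.sum_congr rfl fun i _ => Finset.sum_congr rfl fun j _ => ?_
      rw [hABsymm i j]
      simp [Matrix.sub_apply, sq]
    rw [h1, Matrix.sub_mul, Matrix.mul_sub, Matrix.mul_sub, Matrix.trace_sub,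
      Matrix.trace_sub, Matrix.trace_sub, Matrix.trace_mul_comm B A]
    ring
  -- sums of squares of sorted eigenvalues
  have hsa : ∑ i, (α i)^2 = ∑ i, (a i)^2 := by
    rw [← Equiv.sum_comp σa (fun i => (a i)^2)]
    exact Finset.sum_congr rfl fun i _ => by rw [show a (σa i) = (a ∘ σa) i from rfl, hσa]
  have hsb : ∑ i, (β i)^2 = ∑ i, (b i)^2 := by
    rw [← Equiv.sum_comp σb (fun i => (b i)^2)]
    exact Finset.sum_congr rfl fun i _ => by rw [show b (σb i) = (b ∘ σb) i from rfl, hσb]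
  have expand : ∑ i, (α i - β i)^2
      = ∑ i, (α i)^2 - 2 * ∑ i, α i * β i + ∑ i, (β i)^2 := by
    rw [Finset.mul_sum, ← Finset.sum_sub_distrib, ← Finset.sum_add_distrib]
    exact Finset.sum_congr rfl fun i _ => by ring
  rw [expand, hFrob, htrAA, htrBB, hsa, hsb]
  have := htrAB
  linarith

/-- for real symmetric `A, B` with sorted eigenvalue vectors `α, β`,
`‖α - β‖₁ ≤ √N · ‖A - B‖_F`. -/
theorem stmt5 (N : ℕ) (A B : Matrix (Fin N) (Fin N) ℝ)
    (hA : A.IsHermitian) (hB : B.IsHermitian)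
    (α β : Fin N → ℝ) (hαmono : Monotone α) (hβmono : Monotone β)
    (hα : Multiset.map α Finset.univ.val = Multiset.map hA.eigenvalues Finset.univ.val)
    (hβ : Multiset.map β Finset.univ.val = Multiset.map hB.eigenvalues Finset.univ.val) :
    ∑ i, |α i - β i| ≤ Real.sqrt N * Real.sqrt (∑ i, ∑ j, (A i j - B i j) ^ 2) := by
  have hHW := hw_main A B hA hB α β hαmono hβmono hα hβ
  have hCS : (∑ i, |α i - β i|)^2 ≤ (N : ℝ) * ∑ i, (α i - β i)^2 := by
    have h := Finset.sum_mul_sq_le_sq_mul_sq Finset.univ (fun _ => (1:ℝ))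
      (fun i => |α i - β i|)
    simpa [sq_abs, Finset.card_univ] using h
  have h0 : (0:ℝ) ≤ ∑ i, |α i - β i| := Finset.sum_nonneg fun i _ => abs_nonneg _
  calc ∑ i, |α i - β i| = Real.sqrt ((∑ i, |α i - β i|)^2) := (Real.sqrt_sq h0).symm
    _ ≤ Real.sqrt ((N : ℝ) * ∑ i, ∑ j, (A i j - B i j)^2) := by
        apply Real.sqrt_le_sqrt
        refine hCS.trans ?_
        exact mul_le_mul_of_nonneg_left hHW (Nat.cast_nonneg N)
    _ = Real.sqrt N * Real.sqrt (∑ i, ∑ j, (A i j - B i j) ^ 2) :=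
        Real.sqrt_mul (Nat.cast_nonneg N) _
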